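/- Let M_V = diag(1/b_0,...,1/b_{K-1}) · M_S, where M_S is the tridiagonal matrix with diagonal entries λ_i + ν_i, superdiagonal entries -λ_i, subdiagonal entries -ν_i (with ν_0 = 0, λ_{K-1} = 0, λ_i > 0 for i < K-1, ν_i > 0 for i ≥ 1), and b_i > 0 for all i. Then M_V is diagonalizable over the reals and all of its eigenvalues are real and nonnegative. -/

import Mathlib

open Matrix

noncomputable def stmt5s (K : ℕ) (lam b : Fin K → ℝ) : ℕ → ℝ :=
  fun n => if h : n < K then Real.sqrt (lam ⟨n, h⟩ / b ⟨n, h⟩) else 0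

noncomputable def stmt5t (K : ℕ) (nu b : Fin K → ℝ) : ℕ → ℝ :=
  fun n => if h : n < K then Real.sqrt (nu ⟨n, h⟩ / b ⟨n, h⟩) else 0

noncomputable def stmt5e (K : ℕ) (lam nu b : Fin K → ℝ) : ℕ → ℝ
  | 0 => 1
  | n + 1 => stmt5e K lam nu b n * stmt5s K lam b n / stmt5t K nu b (n + 1)

noncomputable def stmt5L (K : ℕ) (lam nu b : Fin K → ℝ) : Matrix (Fin K) (Fin K) ℝ :=
  fun k i => (if (i : ℕ) = (k : ℕ) then stmt5s K lam b i else 0)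
    - (if (i : ℕ) = (k : ℕ) + 1 then stmt5t K nu b i else 0)

section main
variable {K : ℕ} {lam nu b : Fin K → ℝ}

lemma stmt5e_key (hb : ∀ i, 0 < b i)
    (hnu : ∀ i : Fin K, 1 ≤ (i : ℕ) → 0 < nu i)
    (n : ℕ) (h : n + 1 < K) :
    stmt5e K lam nu b (n+1) * stmt5t K nu b (n+1) = stmt5e K lam nu b n * stmt5s K lam b n := by
  have ht : 0 < stmt5t K nu b (n+1) := by
    unfold stmt5t
    rw [dif_pos h]
    exact Real.sqrt_pos.2 (div_pos (hnu ⟨n+1, h⟩ (by simp)) (hb _))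
  rw [stmt5e]
  field_simp

lemma stmt5e_pos (hb : ∀ i, 0 < b i)
    (hlam : ∀ i : Fin K, (i : ℕ) < K - 1 → 0 < lam i)
    (hnu : ∀ i : Fin K, 1 ≤ (i : ℕ) → 0 < nu i) :
    ∀ n, n < K → 0 < stmt5e K lam nu b n := by
  intro n
  induction n with
  | zero => intro _; rw [stmt5e]; norm_num
  | succ n ih =>
    intro h
    have hn : n < K := by omega
    have hs : 0 < stmt5s K lam b n := by
      unfold stmt5s
      rw [dif_pos hn]
      exact Real.sqrt_pos.2 (div_pos (hlam ⟨n, hn⟩ (by simp; omega)) (hb _))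
    have ht : 0 < stmt5t K nu b (n+1) := by
      unfold stmt5t
      rw [dif_pos h]
      exact Real.sqrt_pos.2 (div_pos (hnu ⟨n+1, h⟩ (by simp)) (hb _))
    have he := ih hn
    rw [stmt5e]
    exact div_pos (mul_pos he hs) ht

lemma stmt5_sum_shift (c : ℝ) (i : Fin K) :
    (∑ k : Fin K, if (i : ℕ) = (k : ℕ) + 1 then c else 0) = if 1 ≤ (i : ℕ) then c else 0 := by
  by_cases h : 1 ≤ (i : ℕ)
  · rw [if_pos h]
    have hlt : (i : ℕ) - 1 < K := by omega
    have hc : ∀ k : Fin K, ((i : ℕ) = (k : ℕ) + 1) ↔ (k = ⟨(i:ℕ)-1, hlt⟩) := by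
      intro k
      rw [Fin.ext_iff]
      simp only [Fin.val_mk]
      omega
    calc (∑ k : Fin K, if (i : ℕ) = (k : ℕ) + 1 then c else 0)
        = ∑ k : Fin K, if k = (⟨(i:ℕ)-1, hlt⟩ : Fin K) then c else 0 := by
          refine Finset.sum_congr rfl fun k _ => ?_
          simp only [hc k]
      _ = c := by rw [Finset.sum_ite_eq' Finset.univ _ (fun _ => c), if_pos (Finset.mem_univ _)]
  · rw [if_neg h]
    apply Finset.sum_eq_zero
    intro k _
    rw [if_neg (by omega)]

lemma stmt5_sum_pivot (c : ℝ) (i : Fin K) :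
    (∑ k : Fin K, if (i : ℕ) = (k : ℕ) then c else 0) = c := by
  have hc : ∀ k : Fin K, ((i : ℕ) = (k : ℕ)) ↔ (k = i) := by
    intro k
    rw [Fin.ext_iff]
    omega
  calc (∑ k : Fin K, if (i : ℕ) = (k : ℕ) then c else 0)
      = ∑ k : Fin K, if k = i then c else 0 := by
        refine Finset.sum_congr rfl fun k _ => ?_
        simp only [hc k]
    _ = c := by rw [Finset.sum_ite_eq' Finset.univ _ (fun _ => c), if_pos (Finset.mem_univ _)]

lemma stmt5_sim (hK : 1 ≤ K)
    (hb : ∀ i, 0 < b i)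
    (hnu0 : nu ⟨0, hK⟩ = 0)
    (hlamlast : lam ⟨K - 1, Nat.sub_lt hK Nat.zero_lt_one⟩ = 0)
    (hlam : ∀ i : Fin K, (i : ℕ) < K - 1 → 0 < lam i)
    (hnu : ∀ i : Fin K, 1 ≤ (i : ℕ) → 0 < nu i)
    (MS : Matrix (Fin K) (Fin K) ℝ)
    (hMS : ∀ i j : Fin K, MS i j =
      if (j : ℕ) = (i : ℕ) then lam i + nu i
      else if (j : ℕ) = (i : ℕ) + 1 then -lam i
      else if (j : ℕ) + 1 = (i : ℕ) then -nu i
      else 0)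
    (MV : Matrix (Fin K) (Fin K) ℝ)
    (hMV : MV = Matrix.diagonal (fun i => (b i)⁻¹) * MS) :
    Matrix.diagonal (fun i : Fin K => stmt5e K lam nu b (i : ℕ)) * MV
      = ((stmt5L K lam nu b)ᴴ * stmt5L K lam nu b)
        * Matrix.diagonal (fun i : Fin K => stmt5e K lam nu b (i : ℕ)) := by
  have hlam0 : ∀ i : Fin K, 0 ≤ lam i := by
    intro i
    by_cases h : (i : ℕ) < K - 1
    · exact (hlam i h).le
    · have : i = ⟨K - 1, by omega⟩ := Fin.ext (by simp only [Fin.val_mk]; have := i.isLt; omega)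
      rw [this, hlamlast]
  have hnu0' : ∀ i : Fin K, 0 ≤ nu i := by
    intro i
    by_cases h : 1 ≤ (i : ℕ)
    · exact (hnu i h).le
    · have : i = ⟨0, by omega⟩ := Fin.ext (by simp only [Fin.val_mk]; omega)
      rw [this, hnu0]
  ext i j
  rw [Matrix.diagonal_mul, Matrix.mul_diagonal, hMV, Matrix.diagonal_mul, hMS,
    Matrix.mul_apply]
  simp only [Matrix.conjTranspose_apply, star_trivial]
  have hss : stmt5s K lam b (i : ℕ) * stmt5s K lam b (i : ℕ) = lam i / b i := by
    simp only [stmt5s]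
    rw [dif_pos i.isLt]
    simp only [Fin.eta]
    exact Real.mul_self_sqrt (div_nonneg (hlam0 i) (hb i).le)
  by_cases hji : (j : ℕ) = (i : ℕ)
  · have hj : i = j := Fin.ext hji.symm
    subst hj
    rw [if_pos rfl]
    have hpt : ∀ k : Fin K, stmt5L K lam nu b k i * stmt5L K lam nu b k i
        = (if (i : ℕ) = (k : ℕ) then stmt5s K lam b (i:ℕ) * stmt5s K lam b (i:ℕ) else 0)
          + (if (i : ℕ) = (k : ℕ) + 1 then stmt5t K nu b (i:ℕ) * stmt5t K nu b (i:ℕ) else 0) := by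
      intro k
      simp only [stmt5L]
      split_ifs <;> first | ring1 | (exfalso; omega)
    rw [Finset.sum_congr rfl (fun k _ => hpt k), Finset.sum_add_distrib,
      stmt5_sum_pivot, stmt5_sum_shift]
    have htt : (if 1 ≤ (i : ℕ) then stmt5t K nu b (i:ℕ) * stmt5t K nu b (i:ℕ) else 0)
        = nu i / b i := by
      by_cases h : 1 ≤ (i : ℕ)
      · rw [if_pos h]
        simp only [stmt5t]
        rw [dif_pos i.isLt]
        simp only [Fin.eta]
        exact Real.mul_self_sqrt (div_nonneg (hnu0' i) (hb i).le)
      · rw [if_neg h]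
        have : i = ⟨0, by omega⟩ := Fin.ext (by simp only [Fin.val_mk]; omega)
        rw [this, hnu0]
        simp
    rw [htt, hss]
    have hbne : b i ≠ 0 := (hb i).ne'
    field_simp
  · rw [if_neg hji]
    by_cases hj1 : (j : ℕ) = (i : ℕ) + 1
    · rw [if_pos hj1]
      have hpt : ∀ k : Fin K, stmt5L K lam nu b k i * stmt5L K lam nu b k j
          = (if (i : ℕ) = (k : ℕ) then -(stmt5s K lam b (i:ℕ) * stmt5t K nu b (j:ℕ)) else 0) := by
        intro k
        simp only [stmt5L]
        split_ifs <;> first | ring1 | (exfalso; omega)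
      rw [Finset.sum_congr rfl (fun k _ => hpt k), stmt5_sum_pivot]
      have hkey := stmt5e_key (lam := lam) hb hnu (i : ℕ) (by omega)
      rw [show (i : ℕ) + 1 = (j : ℕ) from hj1.symm] at hkey
      linear_combination stmt5s K lam b (i:ℕ) * hkey + stmt5e K lam nu b (i:ℕ) * hss
    · rw [if_neg hj1]
      by_cases hj2 : (j : ℕ) + 1 = (i : ℕ)
      · rw [if_pos hj2]
        have hpt : ∀ k : Fin K, stmt5L K lam nu b k i * stmt5L K lam nu b k j
            = (if (j : ℕ) = (k : ℕ) then -(stmt5t K nu b (i:ℕ) * stmt5s K lam b (j:ℕ)) else 0) := by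
          intro k
          simp only [stmt5L]
          split_ifs <;> first | ring1 | (exfalso; omega)
        rw [Finset.sum_congr rfl (fun k _ => hpt k), stmt5_sum_pivot]
        have hkey := stmt5e_key (lam := lam) hb hnu (j : ℕ) (by omega)
        rw [show (j : ℕ) + 1 = (i : ℕ) from hj2] at hkey
        have htt : stmt5t K nu b (i : ℕ) * stmt5t K nu b (i : ℕ) = nu i / b i := by
          simp only [stmt5t]
          rw [dif_pos i.isLt]
          simp only [Fin.eta]
          exact Real.mul_self_sqrt (div_nonneg (hnu0' i) (hb i).le)
        linear_combination (-(stmt5t K nu b (i:ℕ))) * hkey + stmt5e K lam nu b (i:ℕ) * htt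
      · rw [if_neg hj2]
        have hpt : ∀ k : Fin K, stmt5L K lam nu b k i * stmt5L K lam nu b k j = 0 := by
          intro k
          simp only [stmt5L]
          split_ifs <;> first | ring1 | (exfalso; omega)
        rw [Finset.sum_congr rfl (fun k _ => hpt k)]
        simp

end main

/-- The matrix `M_V = diag(1/b_i) · M_S` arising from the prefetching ODE
system is diagonalizable over ℝ with real nonnegative eigenvalues. -/
theorem stmt_5 (K : ℕ) (hK : 1 ≤ K) (lam nu b : Fin K → ℝ)
    (hb : ∀ i, 0 < b i)
    (hnu0 : nu ⟨0, by omega⟩ = 0)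
    (hlamlast : lam ⟨K - 1, by omega⟩ = 0)
    (hlam : ∀ i : Fin K, (i : ℕ) < K - 1 → 0 < lam i)
    (hnu : ∀ i : Fin K, 1 ≤ (i : ℕ) → 0 < nu i)
    (MS : Matrix (Fin K) (Fin K) ℝ)
    (hMS : ∀ i j : Fin K, MS i j =
      if (j : ℕ) = (i : ℕ) then lam i + nu i
      else if (j : ℕ) = (i : ℕ) + 1 then -lam i
      else if (j : ℕ) + 1 = (i : ℕ) then -nu i
      else 0)
    (MV : Matrix (Fin K) (Fin K) ℝ)
    (hMV : MV = Matrix.diagonal (fun i => (b i)⁻¹) * MS) :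
    ∃ D : Matrix (Fin K) (Fin K) ℝ, ∃ Λ : Fin K → ℝ,
      IsUnit D ∧ MV = D * Matrix.diagonal Λ * D⁻¹ ∧ ∀ i, 0 ≤ Λ i := by
  set E : Matrix (Fin K) (Fin K) ℝ :=
    Matrix.diagonal (fun i : Fin K => stmt5e K lam nu b (i : ℕ)) with hE
  set L : Matrix (Fin K) (Fin K) ℝ := stmt5L K lam nu b with hL
  have hsim : E * MV = (Lᴴ * L) * E :=
    stmt5_sim hK hb hnu0 hlamlast hlam hnu MS hMS MV hMV
  have hePos : ∀ i : Fin K, stmt5e K lam nu b (i : ℕ) ≠ 0 :=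
    fun i => (stmt5e_pos hb hlam hnu (i : ℕ) i.isLt).ne'
  have hEdet : IsUnit E.det := by
    rw [hE, Matrix.det_diagonal]
    exact isUnit_iff_ne_zero.2 (Finset.prod_ne_zero_iff.2 fun i _ => hePos i)
  have hEunit : IsUnit E := (Matrix.isUnit_iff_isUnit_det _).2 hEdet
  have hPSD : (Lᴴ * L).PosSemidef := Matrix.posSemidef_conjTranspose_mul_self L
  have hH : (Lᴴ * L).IsHermitian := hPSD.1
  set U : Matrix (Fin K) (Fin K) ℝ := (hH.eigenvectorUnitary : Matrix (Fin K) (Fin K) ℝ) with hU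
  have hUmem : U ∈ Matrix.unitaryGroup (Fin K) ℝ := hH.eigenvectorUnitary.2
  have hUst : star U * U = 1 := hUmem.1
  have hUst' : U * star U = 1 := hUmem.2
  have hUdet : IsUnit U.det := by
    have h := congrArg Matrix.det hUst'
    rw [Matrix.det_mul, Matrix.det_one] at h
    exact IsUnit.of_mul_eq_one _ h
  have hUunit : IsUnit U := (Matrix.isUnit_iff_isUnit_det _).2 hUdet
  have hUinv : U⁻¹ = star U := Matrix.inv_eq_left_inv hUst
  have hspec0 : Lᴴ * L = U * Matrix.diagonal hH.eigenvalues * star U := by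
    have h := hH.spectral_theorem
    have : (RCLike.ofReal ∘ hH.eigenvalues : Fin K → ℝ) = hH.eigenvalues := funext fun i => rfl
    rwa [this] at h
  obtain ⟨Lam, hLamnn, hspec⟩ : ∃ Lam : Fin K → ℝ, (∀ i, 0 ≤ Lam i)
      ∧ Lᴴ * L = U * Matrix.diagonal Lam * star U :=
    ⟨hH.eigenvalues, fun i => hPSD.eigenvalues_nonneg i, hspec0⟩
  have hEinvUnit : IsUnit (E⁻¹) := by
    refine (Matrix.isUnit_iff_isUnit_det _).2 ?_
    rw [Matrix.det_nonsing_inv]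
    exact isUnit_ringInverse.2 hEdet
  refine ⟨E⁻¹ * U, Lam, hEinvUnit.mul hUunit, ?_, hLamnn⟩
  have hMVeq : MV = E⁻¹ * ((Lᴴ * L) * E) := by
    rw [← hsim, ← Matrix.mul_assoc, Matrix.nonsing_inv_mul E hEdet, Matrix.one_mul]
  have hDinv : (E⁻¹ * U)⁻¹ = star U * E := by
    rw [Matrix.mul_inv_rev, hUinv, Matrix.nonsing_inv_nonsing_inv E hEdet]
  rw [hDinv, hMVeq, hspec]
  simp only [Matrix.mul_assoc]
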